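/- In the airport game with cost vector c ∈ ℝ^n, c₁ ≤ c₂ ≤ ... ≤ c_n, defined by v(S) = max{c_i : i ∈ S} (and v(∅)=0), the Shapley values are given by Sh(i) = Σ_{j=1}^{i} (c_j − c_{j−1})/(n − j + 1), where c₀ = 0. -/

import Mathlib

open Finset

/-- The set of players preceding `i` in the order `o`. -/
def Pre {N : Type*} [Fintype N] [DecidableEq N]
    (o : N ≃ Fin (Fintype.card N)) (i : N) : Finset N :=
  univ.filter fun j => o j < o i

/-- The marginal contribution of player `i` in the order `o`. -/
def mc {N : Type*} [Fintype N] [DecidableEq N] (v : Finset N → ℝ)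
    (o : N ≃ Fin (Fintype.card N)) (i : N) : ℝ :=
  v (insert i (Pre o i)) - v (Pre o i)

/-- The Shapley value: average marginal contribution over all orders. -/
noncomputable def Sh {N : Type*} [Fintype N] [DecidableEq N]
    (v : Finset N → ℝ) (i : N) : ℝ :=
  (∑ o : N ≃ Fin (Fintype.card N), mc v o i) / (Nat.factorial (Fintype.card N))


lemma fiber_card_eq (n m : ℕ) (T : Finset (Fin n)) (i t : Fin n) (hi : i ∈ T) (ht : t ∈ T) :
    (univ.filter fun o : Fin n ≃ Fin m => ∀ k ∈ T, o t ≤ o k).card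
      = (univ.filter fun o : Fin n ≃ Fin m => ∀ k ∈ T, o i ≤ o k).card := by
  apply Finset.card_nbij' (fun o => (Equiv.swap i t).trans o) (fun o => (Equiv.swap i t).trans o)
  · intro o ho
    simp only [mem_coe, mem_filter, mem_univ, true_and, Equiv.trans_apply] at *
    intro k hk
    have hswap : Equiv.swap i t k ∈ T := by
      rcases eq_or_ne k i with rfl | hki
      · simpa [Equiv.swap_apply_left] using ht
      rcases eq_or_ne k t with rfl | hkt
      · simpa [Equiv.swap_apply_right] using hi
      · rwa [Equiv.swap_apply_of_ne_of_ne hki hkt]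
    simpa [Equiv.swap_apply_left] using ho _ hswap
  · intro o ho
    simp only [mem_coe, mem_filter, mem_univ, true_and, Equiv.trans_apply] at *
    intro k hk
    have hswap : Equiv.swap i t k ∈ T := by
      rcases eq_or_ne k i with rfl | hki
      · simpa [Equiv.swap_apply_left] using ht
      rcases eq_or_ne k t with rfl | hkt
      · simpa [Equiv.swap_apply_right] using hi
      · rwa [Equiv.swap_apply_of_ne_of_ne hki hkt]
    simpa [Equiv.swap_apply_right] using ho _ hswap
  · intro o _; ext k; simp [← Equiv.trans_assoc]
  · intro o _; ext k; simp [← Equiv.trans_assoc]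

lemma count_first (n m : ℕ) (T : Finset (Fin n)) (i : Fin n) (hi : i ∈ T) :
    (univ.filter fun o : Fin n ≃ Fin m => ∀ k ∈ T, o i ≤ o k).card * T.card
      = Fintype.card (Fin n ≃ Fin m) := by
  have hT : T.Nonempty := ⟨i, hi⟩
  have himg : ∀ o : Fin n ≃ Fin m, (T.image o).Nonempty := fun o => hT.image o
  set f : (Fin n ≃ Fin m) → Fin n := fun o => o.symm ((T.image o).min' (himg o)) with hf
  have hfmem : ∀ o : Fin n ≃ Fin m, f o ∈ T := by
    intro o
    obtain ⟨k, hk, hok⟩ := Finset.mem_image.mp ((T.image o).min'_mem (himg o))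
    simpa [hf, ← hok] using hk
  have key : ∀ t ∈ T, (univ.filter fun o : Fin n ≃ Fin m => f o = t)
      = (univ.filter fun o : Fin n ≃ Fin m => ∀ k ∈ T, o t ≤ o k) := by
    intro t ht
    ext o
    simp only [mem_filter, mem_univ, true_and]
    constructor
    · intro h k hk
      have : o t = (T.image o).min' (himg o) := by
        rw [← h]; simp [hf]
      rw [this]
      exact Finset.min'_le _ _ (Finset.mem_image_of_mem o hk)
    · intro h
      have hmin : (T.image o).min' (himg o) = o t := by
        apply le_antisymm
        · exact Finset.min'_le _ _ (Finset.mem_image_of_mem o ht)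
        · exact Finset.le_min' _ _ _ (by rintro y hy; obtain ⟨k, hk, rfl⟩ := Finset.mem_image.mp hy; exact h k hk)
      simp [hf, hmin]
  have hpart : (univ : Finset (Fin n ≃ Fin m)).card
      = ∑ t ∈ T, (univ.filter fun o : Fin n ≃ Fin m => ∀ k ∈ T, o t ≤ o k).card := by
    rw [Finset.card_eq_sum_card_fiberwise (f := f) (t := T) (fun o _ => hfmem o)]
    exact Finset.sum_congr rfl fun t ht => by rw [← key t ht]
  have : ∑ t ∈ T, (univ.filter fun o : Fin n ≃ Fin m => ∀ k ∈ T, o t ≤ o k).card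
      = ∑ t ∈ T, (univ.filter fun o : Fin n ≃ Fin m => ∀ k ∈ T, o i ≤ o k).card :=
    Finset.sum_congr rfl fun t ht => fiber_card_eq n m T i t hi ht
  rw [mul_comm, ← smul_eq_mul, ← Finset.sum_const, ← this, ← hpart, Fintype.card, Finset.card_univ]

lemma telescope_sum (c : ℕ → ℝ) (a b : ℕ) (hab : a ≤ b) :
    ∑ j ∈ Finset.Ico a b, (c j - if j = 0 then 0 else c (j - 1))
      = (if b = 0 then 0 else c (b - 1)) - (if a = 0 then 0 else c (a - 1)) := by
  set g : ℕ → ℝ := fun j => if j = 0 then 0 else c (j - 1) with hg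
  have hterm : ∀ j, c j - (if j = 0 then 0 else c (j - 1)) = g (j + 1) - g j := by
    intro j; simp [hg]
  calc ∑ j ∈ Finset.Ico a b, (c j - if j = 0 then 0 else c (j - 1))
      = ∑ j ∈ Finset.Ico a b, (g (j + 1) - g j) := Finset.sum_congr rfl fun j _ => hterm j
    _ = ∑ j ∈ Finset.range b, (g (j + 1) - g j) - ∑ j ∈ Finset.range a, (g (j + 1) - g j) :=
        Finset.sum_Ico_eq_sub _ hab
    _ = (g b - g 0) - (g a - g 0) := by rw [Finset.sum_range_sub, Finset.sum_range_sub]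
    _ = g b - g a := by ring

lemma mc_eq (n : ℕ) (c : ℕ → ℝ)
    (hnonneg : ∀ j, j < n → 0 ≤ c j)
    (hmono : ∀ j k, j ≤ k → k < n → c j ≤ c k)
    (v : Finset (Fin n) → ℝ)
    (hv : ∀ S : Finset (Fin n), v S = if h : S.Nonempty
      then S.sup' h (fun j => c j.val) else 0)
    (i : Fin n) (o : Fin n ≃ Fin (Fintype.card (Fin n))) :
    mc v o i = ∑ j ∈ Finset.range (i.val + 1),
      (c j - if j = 0 then 0 else c (j - 1)) *
        (if ∀ k : Fin n, j ≤ k.val → o i ≤ o k then 1 else 0) := by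
  classical
  set S := Pre o i with hS
  have hiS : i ∉ S := by simp [hS, Pre]
  set M := S.sup (fun k => k.val + 1) with hM
  have claim1 : ∀ j, (∀ k : Fin n, j ≤ k.val → o i ≤ o k) ↔ M ≤ j := by
    intro j
    constructor
    · intro h
      apply Finset.sup_le
      intro k hk
      by_contra hc
      push_neg at hc
      have := h k (by omega)
      have hk' : o k < o i := by simpa [hS, Pre] using hk
      exact absurd this (not_le.mpr hk')
    · intro h k hk
      rcases eq_or_ne k i with rfl | hki
      · exact le_rfl
      rcases lt_or_ge (o k) (o i) with hlt | hle
      · exfalso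
        have : k ∈ S := by simpa [hS, Pre] using hlt
        have h2 : k.val + 1 ≤ M := Finset.le_sup (f := fun k : Fin n => k.val + 1) this
        omega
      · exact hle
  have hRHS : ∑ j ∈ Finset.range (i.val + 1),
      (c j - if j = 0 then 0 else c (j - 1)) *
        (if ∀ k : Fin n, j ≤ k.val → o i ≤ o k then 1 else 0)
      = ∑ j ∈ Finset.Ico M (i.val + 1), (c j - if j = 0 then 0 else c (j - 1)) := by
    have hfilter : (Finset.range (i.val + 1)).filter (fun j => M ≤ j) = Finset.Ico M (i.val + 1) := by
      ext j; simp only [Finset.mem_filter, Finset.mem_range, Finset.mem_Ico]; omega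
    calc ∑ j ∈ Finset.range (i.val + 1),
        (c j - if j = 0 then 0 else c (j - 1)) *
          (if ∀ k : Fin n, j ≤ k.val → o i ≤ o k then 1 else 0)
        = ∑ j ∈ Finset.range (i.val + 1),
            (if M ≤ j then (c j - if j = 0 then 0 else c (j - 1)) else 0) := by
          refine Finset.sum_congr rfl fun j _ => ?_
          rw [if_congr (claim1 j) rfl rfl, mul_boole]
      _ = ∑ j ∈ (Finset.range (i.val + 1)).filter (fun j => M ≤ j),
            (c j - if j = 0 then 0 else c (j - 1)) := (Finset.sum_filter _ _).symm
      _ = ∑ j ∈ Finset.Ico M (i.val + 1), (c j - if j = 0 then 0 else c (j - 1)) := by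
          rw [hfilter]
  rw [hRHS]
  rcases le_or_gt M i.val with hMi | hMi
  · -- M ≤ i : mc = c i - g M
    have hSlt : ∀ k ∈ S, k.val < i.val := by
      intro k hk
      have h2 : k.val + 1 ≤ M := Finset.le_sup (f := fun k : Fin n => k.val + 1) hk
      omega
    have hins : v (insert i S) = c i.val := by
      rw [hv]
      rw [dif_pos ⟨i, Finset.mem_insert_self i S⟩]
      apply le_antisymm
      · apply Finset.sup'_le
        intro k hk
        rcases Finset.mem_insert.mp hk with rfl | hk
        · exact le_rfl
        · exact hmono k.val i.val (le_of_lt (hSlt k hk)) i.isLt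
      · exact Finset.le_sup' (fun j : Fin n => c j.val) (Finset.mem_insert_self i S)
    rw [telescope_sum c M (i.val + 1) (by omega)]
    simp only [Nat.succ_ne_zero, if_false, Nat.add_sub_cancel]
    rcases Nat.eq_zero_or_pos M with hM0 | hMpos
    · -- S empty
      have hSe : S = ∅ := by
        by_contra hne
        obtain ⟨k, hk⟩ := Finset.nonempty_iff_ne_empty.mpr hne
        have h2 : k.val + 1 ≤ M := Finset.le_sup (f := fun k : Fin n => k.val + 1) hk
        omega
      rw [mc, ← hS, hins, hSe, hv]
      simp [hM0]
    · -- S nonempty, v S = c (M-1)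
      have hSne : S.Nonempty := by
        by_contra hne
        rw [Finset.not_nonempty_iff_eq_empty] at hne
        rw [hne] at hM
        simp at hM
        omega
      obtain ⟨k0, hk0, hk0M⟩ := Finset.exists_mem_eq_sup S hSne (fun k => k.val + 1)
      have hk0v : k0.val = M - 1 := by omega
      have hvS : v S = c (M - 1) := by
        rw [hv, dif_pos hSne]
        apply le_antisymm
        · apply Finset.sup'_le
          intro k hk
          have h2 : k.val + 1 ≤ M := Finset.le_sup (f := fun k : Fin n => k.val + 1) hk
          exact hmono k.val (M-1) (by omega) (by omega)
        · rw [← hk0v]; exact Finset.le_sup' (fun j : Fin n => c j.val) hk0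
      rw [mc, ← hS, hins, hvS]
      rw [if_neg (by omega)]
  · -- i < M : mc = 0, Ico empty
    rw [Finset.Ico_eq_empty (by omega), Finset.sum_empty]
    have hSne : S.Nonempty := by
      by_contra hne
      rw [Finset.not_nonempty_iff_eq_empty] at hne
      rw [hne] at hM
      simp at hM
      omega
    obtain ⟨k0, hk0, hk0M⟩ := Finset.exists_mem_eq_sup S hSne (fun k => k.val + 1)
    have hci : c i.val ≤ c k0.val := hmono i.val k0.val (by omega) k0.isLt
    have : v (insert i S) = v S := by
      rw [hv, hv, dif_pos hSne, dif_pos ⟨i, Finset.mem_insert_self i S⟩]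
      rw [Finset.sup'_insert hSne]
      apply sup_eq_right.mpr
      exact le_trans hci (Finset.le_sup' (fun j : Fin n => c j.val) hk0)
    rw [mc, ← hS, this, sub_self]

/-- In the airport game with nondecreasing nonnegative costs `c₀ ≤ c₁ ≤ … ≤ c_{n-1}`
(players indexed from `0`), where `v(S) = max{c_j : j ∈ S}` and `v(∅) = 0`, the
Shapley value of player `i` is `Σ_{j=0}^{i} (c_j − c_{j-1})/(n − j)` (with
`c_{-1} = 0`; in 1-indexed notation this is `Σ_{j=1}^{i} (c_j − c_{j−1})/(n − j + 1)`
with `c₀ = 0`). -/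
theorem shapley_airport_game (n : ℕ) (c : ℕ → ℝ)
    (hnonneg : ∀ j, j < n → 0 ≤ c j)
    (hmono : ∀ j k, j ≤ k → k < n → c j ≤ c k)
    (v : Finset (Fin n) → ℝ)
    (hv : ∀ S : Finset (Fin n), v S = if h : S.Nonempty
      then S.sup' h (fun j => c j.val) else 0)
    (i : Fin n) :
    Sh v i = ∑ j ∈ Finset.range (i.val + 1),
      (c j - if j = 0 then 0 else c (j - 1)) / (n - j) := by
  classical
  have hcard : Fintype.card (Fin n ≃ Fin (Fintype.card (Fin n))) = Nat.factorial n := by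
    rw [Fintype.card_equiv (finCongr (Fintype.card_fin n).symm), Fintype.card_fin]
  have hfn : (Fintype.card (Fin n)).factorial = n.factorial := by rw [Fintype.card_fin]
  rw [Sh, hfn]
  have hsum : (∑ o : Fin n ≃ Fin (Fintype.card (Fin n)), mc v o i)
      = ∑ j ∈ Finset.range (i.val + 1), (c j - if j = 0 then 0 else c (j - 1)) *
          ((univ.filter fun o : Fin n ≃ Fin (Fintype.card (Fin n)) =>
            ∀ k : Fin n, j ≤ k.val → o i ≤ o k).card : ℝ) := by
    rw [Finset.sum_congr rfl (fun o _ => mc_eq n c hnonneg hmono v hv i o)]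
    rw [Finset.sum_comm]
    refine Finset.sum_congr rfl fun j _ => ?_
    rw [← Finset.mul_sum, Finset.sum_boole]
  rw [hsum, Finset.sum_div]
  refine Finset.sum_congr rfl fun j hj => ?_
  rw [Finset.mem_range] at hj
  have hjn : j < n := lt_of_lt_of_le hj (by omega : i.val + 1 ≤ n)
  set T : Finset (Fin n) := univ.filter fun k => j ≤ k.val with hT
  have hiT : i ∈ T := by simp [hT]; omega
  have hTcard : T.card = n - j := by
    have : T = Finset.Ici (⟨j, hjn⟩ : Fin n) := by
      ext k; simp [hT, Finset.mem_Ici, Fin.le_def]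
    rw [this, Fin.card_Ici]
  have hpred : ∀ o : Fin n ≃ Fin (Fintype.card (Fin n)),
      (∀ k : Fin n, j ≤ k.val → o i ≤ o k) ↔ (∀ k ∈ T, o i ≤ o k) := by
    intro o; constructor
    · intro h k hk; exact h k (by simpa [hT] using hk)
    · intro h k hk; exact h k (by simp [hT]; omega)
  have hA : (univ.filter fun o : Fin n ≃ Fin (Fintype.card (Fin n)) =>
      ∀ k : Fin n, j ≤ k.val → o i ≤ o k)
      = (univ.filter fun o : Fin n ≃ Fin (Fintype.card (Fin n)) => ∀ k ∈ T, o i ≤ o k) := by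
    ext o; simp only [Finset.mem_filter, Finset.mem_univ, true_and]; exact hpred o
  have hcount := count_first n (Fintype.card (Fin n)) T i hiT
  rw [hTcard, hcard] at hcount
  rw [hA]
  -- now: card * (n - j) = n!
  have hnj : (0:ℝ) < ((n - j : ℕ) : ℝ) := by
    have : 0 < n - j := by omega
    exact_mod_cast this
  have hfac : (0:ℝ) < (Nat.factorial n : ℝ) := by exact_mod_cast Nat.factorial_pos n
  have hcountR : ((univ.filter fun o : Fin n ≃ Fin (Fintype.card (Fin n)) =>
      ∀ k ∈ T, o i ≤ o k).card : ℝ) * ((n - j : ℕ) : ℝ) = (Nat.factorial n : ℝ) := by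
    exact_mod_cast congrArg (Nat.cast : ℕ → ℝ) hcount
  have hnj' : ((n:ℝ) - (j:ℝ)) = ((n - j : ℕ) : ℝ) := by
    rw [Nat.cast_sub (le_of_lt hjn)]
  rw [hnj', div_eq_div_iff (ne_of_gt hfac) (ne_of_gt hnj), mul_assoc, hcountR]
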